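/- If G is a chordal graph and T is a clique tree of G, then a set S of vertices is a minimal separator of G if and only if S = C_i ∩ C_j for some edge (C_i, C_j) of T. -/

import Mathlib

/-- A graph is chordal if every cycle of length greater than 3 has a chord. -/
def IsChordal {V : Type*} (G : SimpleGraph V) : Prop :=
  ∀ (u : V) (c : G.Walk u u), c.IsCycle → 3 < c.length →
    ∃ x y, x ∈ c.support ∧ y ∈ c.support ∧ G.Adj x y ∧ s(x, y) ∉ c.edges

/-- A maximal clique: a clique not properly contained in any other clique. -/
def IsMaximalClique {V : Type*} (G : SimpleGraph V) (s : Set V) : Prop :=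
  G.IsClique s ∧ ∀ t : Set V, G.IsClique t → s ⊆ t → s = t

/-- `S` separates `u` from `v` in `G`. -/
def Separates {V : Type*} (G : SimpleGraph V) (S : Set V) (u v : V) : Prop :=
  u ∉ S ∧ v ∉ S ∧ u ≠ v ∧ ∀ p : G.Walk u v, ∃ x ∈ p.support, x ∈ S

/-- `S` is a minimal separator of `G`. -/
def IsMinimalSeparator {V : Type*} (G : SimpleGraph V) (S : Set V) : Prop :=
  ∃ u v : V, Separates G S u v ∧ ∀ S' ⊆ S, Separates G S' u v → S' = S

open SimpleGraph

section Aux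

variable {α : Type*} {V : Type*}

/-- `D` lies on the `Ci` side of the edge `{Ci, Cj}`:
there is a walk from `D` to `Ci` avoiding that edge. -/
def SideOf (T : SimpleGraph α) (Ci Cj D : α) : Prop :=
  ∃ p : T.Walk D Ci, s(Ci, Cj) ∉ p.edges

lemma sideOf_disjoint {T : SimpleGraph α} (hT : T.IsTree) {Ci Cj D : α}
    (hadj : T.Adj Ci Cj) (h1 : SideOf T Ci Cj D) (h2 : SideOf T Cj Ci D) : False := by
  obtain ⟨p, hp⟩ := h1
  obtain ⟨q, hq⟩ := h2
  have hb := (SimpleGraph.isAcyclic_iff_forall_adj_isBridge.mp hT.IsAcyclic hadj)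
  rw [SimpleGraph.isBridge_iff_adj_and_forall_walk_mem_edges] at hb
  have hmem := hb (p.reverse.append q)
  rw [Walk.edges_append, List.mem_append, Walk.edges_reverse, List.mem_reverse] at hmem
  rcases hmem with h | h
  · exact hp h
  · exact hq (Sym2.eq_swap ▸ h)

lemma sideOf_cover {T : SimpleGraph α} (hT : T.IsTree) (Ci Cj D : α) :
    SideOf T Ci Cj D ∨ SideOf T Cj Ci D := by
  obtain ⟨p⟩ := hT.isConnected.preconnected D Ci
  induction p with
  | nil => exact Or.inl ⟨Walk.nil, by simp⟩
  | @cons D D₂ Ci h q ih =>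
    by_cases he : s(D, D₂) = s(Ci, Cj)
    · rw [Sym2.eq_iff] at he
      rcases he with ⟨rfl, rfl⟩ | ⟨rfl, rfl⟩
      · exact Or.inl ⟨Walk.nil, by simp⟩
      · exact Or.inr ⟨Walk.nil, by simp⟩
    · rcases ih with ⟨w, hw⟩ | ⟨w, hw⟩
      · refine Or.inl ⟨Walk.cons h w, ?_⟩
        rw [Walk.edges_cons, List.mem_cons]
        rintro (h' | h')
        · exact he h'.symm
        · exact hw h'
      · refine Or.inr ⟨Walk.cons h w, ?_⟩
        rw [Walk.edges_cons, List.mem_cons]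
        rintro (h' | h')
        · exact he (by rw [← h', Sym2.eq_swap])
        · exact hw h'

lemma dart_sides {T : SimpleGraph α} {X Y : α} (p : T.Walk X Y) :
    p.IsPath → ∀ d ∈ p.darts,
      (∃ w : T.Walk X d.fst, d.edge ∉ w.edges) ∧ (∃ w : T.Walk d.snd Y, d.edge ∉ w.edges) := by
  induction p with
  | nil => intro _ d hd; simp [Walk.darts_nil] at hd
  | @cons X b Y h q ih =>
    intro hp d hd
    have hnod : s(X, b) ∉ q.edges := by
      have h1 := hp.isTrail.edges_nodup
      rw [Walk.edges_cons, List.nodup_cons] at h1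
      exact h1.1
    rw [Walk.darts_cons, List.mem_cons] at hd
    rcases hd with rfl | hd
    · exact ⟨⟨Walk.nil, by simp⟩, ⟨q, hnod⟩⟩
    · obtain ⟨⟨w1, h1⟩, ⟨w2, h2⟩⟩ := ih hp.of_cons d hd
      refine ⟨⟨Walk.cons h w1, ?_⟩, ⟨w2, h2⟩⟩
      rw [Walk.edges_cons, List.mem_cons]
      rintro (he | he)
      · have hmem : d.edge ∈ q.edges := by
          rw [Walk.edges]; exact List.mem_map_of_mem hd
        exact hnod (he ▸ hmem)
      · exact h1 he

/-- Every clique is contained in a maximal clique. -/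
lemma exists_maximalClique_supset {G : SimpleGraph V} {s : Set V} (hs : G.IsClique s) :
    ∃ C : Set V, IsMaximalClique G C ∧ s ⊆ C := by
  have hub : ∀ c ⊆ {t : Set V | G.IsClique t}, IsChain (· ⊆ ·) c → c.Nonempty →
      ∃ ub ∈ {t : Set V | G.IsClique t}, ∀ s ∈ c, s ⊆ ub := by
    intro c hc hchain hne
    refine ⟨⋃₀ c, ?_, fun t ht => Set.subset_sUnion_of_mem ht⟩
    intro x hx y hy hxy
    obtain ⟨tx, htx, hxt⟩ := hx
    obtain ⟨ty, hty, hyt⟩ := hy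
    rcases hchain.total htx hty with hsub | hsub
    · exact hc hty (hsub hxt) hyt hxy
    · exact hc htx hxt (hsub hyt) hxy
  obtain ⟨m, hm, hmax⟩ := zorn_subset_nonempty {t : Set V | G.IsClique t} hub s hs
  exact ⟨m, ⟨hmax.1, fun t ht hsub => hsub.antisymm (hmax.2 ht hsub)⟩, hm⟩

variable {G : SimpleGraph V} {T : SimpleGraph {C : Set V // IsMaximalClique G C}}

lemma cross_lemma (hT : T.IsTree)
    (hconn : ∀ v : V, (T.induce {C | v ∈ C.1}).Connected)
    {Ci Cj : {C : Set V // IsMaximalClique G C}} (hadj : T.Adj Ci Cj)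
    {v : V} {C D : {C : Set V // IsMaximalClique G C}} (hC : v ∈ C.1) (hD : v ∈ D.1)
    (h1 : SideOf T Ci Cj C) (h2 : SideOf T Cj Ci D) : v ∈ Ci.1 ∧ v ∈ Cj.1 := by
  obtain ⟨q⟩ := (hconn v).preconnected ⟨C, hC⟩ ⟨D, hD⟩
  have hsupp : ∀ X ∈ (q.map
      (SimpleGraph.Embedding.induce (G := T) {C | v ∈ C.1}).toHom).support, v ∈ X.1 := by
    intro X hX
    rw [Walk.support_map, List.mem_map] at hX
    obtain ⟨a, _, rfl⟩ := hX
    exact a.2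
  by_cases he : s(Ci, Cj) ∈ (q.map
      (SimpleGraph.Embedding.induce (G := T) {C | v ∈ C.1}).toHom).edges
  · exact ⟨hsupp _ (Walk.fst_mem_support_of_mem_edges _ he),
      hsupp _ (Walk.snd_mem_support_of_mem_edges _ he)⟩
  · exfalso
    obtain ⟨r, hr⟩ := h2
    refine sideOf_disjoint hT hadj h1 ⟨(q.map
      (SimpleGraph.Embedding.induce (G := T) {C | v ∈ C.1}).toHom).append r, ?_⟩
    erw [Walk.edges_append, List.mem_append]
    rintro (h | h)
    · exact he (Sym2.eq_swap ▸ h)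
    · exact hr h

lemma sep_lemma (hT : T.IsTree)
    (hconn : ∀ v : V, (T.induce {C | v ∈ C.1}).Connected)
    {Ci Cj : {C : Set V // IsMaximalClique G C}} (hadj : T.Adj Ci Cj)
    {x y : V} (wxy : G.Walk x y) :
    (∃ C : {C : Set V // IsMaximalClique G C}, x ∈ C.1 ∧ SideOf T Ci Cj C) →
    (∃ D : {C : Set V // IsMaximalClique G C}, y ∈ D.1 ∧ SideOf T Cj Ci D) →
    ∃ z ∈ wxy.support, z ∈ Ci.1 ∧ z ∈ Cj.1 := by
  induction wxy with
  | nil =>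
    rintro ⟨C, hC, hsC⟩ ⟨D, hD, hsD⟩
    exact ⟨_, Walk.start_mem_support _, cross_lemma hT hconn hadj hC hD hsC hsD⟩
  | @cons x b y h q ih =>
    rintro ⟨C, hC, hsC⟩ hy
    have hpair : G.IsClique {x, b} := isClique_pair.mpr fun _ => h
    obtain ⟨E, hE, hsubE⟩ := exists_maximalClique_supset hpair
    have hxE : x ∈ E := hsubE (by simp)
    have hbE : b ∈ E := hsubE (by simp)
    rcases sideOf_cover hT Ci Cj ⟨E, hE⟩ with hside | hside
    · obtain ⟨z, hz, hzz⟩ := ih ⟨⟨E, hE⟩, hbE, hside⟩ hy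
      exact ⟨z, by rw [Walk.support_cons]; exact List.mem_cons_of_mem _ hz, hzz⟩
    · exact ⟨x, Walk.start_mem_support _,
        cross_lemma hT hconn hadj hC hxE hsC hside⟩

lemma walk_or_dart {S : Set V} {v : V} (hvS : v ∉ S) :
    ∀ {D Cv : {C : Set V // IsMaximalClique G C}} (p : T.Walk D Cv), v ∈ Cv.1 →
      ∀ x : V, x ∈ D.1 → x ∉ S →
      (∃ w : G.Walk x v, ∀ y ∈ w.support, y ∉ S) ∨
        ∃ d ∈ p.darts, d.fst.1 ∩ d.snd.1 ⊆ S := by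
  intro D Cv p
  induction p with
  | @nil Cv =>
    intro hv x hx hxS
    left
    by_cases hxy : x = v
    · subst hxy
      exact ⟨Walk.nil, by intro y hy; simp at hy; subst hy; exact hxS⟩
    · refine ⟨Walk.cons (Cv.2.1 hx hv hxy) Walk.nil, ?_⟩
      intro y hy
      simp only [Walk.support_cons, Walk.support_nil, List.mem_cons, List.mem_singleton,
        List.not_mem_nil, or_false] at hy
      rcases hy with rfl | rfl
      · exact hxS
      · exact hvS
  | @cons D D₂ Cv' h q ih =>
    intro hv x hx hxS
    by_cases hss : D.1 ∩ D₂.1 ⊆ S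
    · exact Or.inr ⟨⟨(D, D₂), h⟩, by simp [Walk.darts_cons], hss⟩
    · obtain ⟨y, hy, hyS⟩ := Set.not_subset.mp hss
      rcases ih hv y hy.2 hyS with ⟨w, hw⟩ | ⟨d, hd, h'⟩
      · left
        by_cases hxy : x = y
        · subst hxy; exact ⟨w, hw⟩
        · refine ⟨Walk.cons (D.2.1 hx hy.1 hxy) w, ?_⟩
          intro z hz
          rw [Walk.support_cons, List.mem_cons] at hz
          rcases hz with rfl | hz
          · exact hxS
          · exact hw z hz
      · exact Or.inr ⟨d, by rw [Walk.darts_cons]; exact List.mem_cons_of_mem _ hd, h'⟩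

end Aux

/-- Ho–Lee: if `G` is chordal and `T` is a clique tree of `G` (a tree on the maximal
cliques of `G` such that for every vertex `v` the maximal cliques containing `v`
induce a connected subtree of `T`), then `S` is a minimal separator of `G` iff
`S = Cᵢ ∩ Cⱼ` for some edge `(Cᵢ, Cⱼ)` of `T`. -/
theorem minimalSeparator_iff_cliqueTree_edge_inter {V : Type*} [Fintype V]
    (G : SimpleGraph V) (hG : IsChordal G)
    (T : SimpleGraph {C : Set V // IsMaximalClique G C}) (hT : T.IsTree)
    (hconn : ∀ v : V, (T.induce {C | v ∈ C.1}).Connected) (S : Set V) :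
    IsMinimalSeparator G S ↔
      ∃ Ci Cj : {C : Set V // IsMaximalClique G C}, T.Adj Ci Cj ∧ S = Ci.1 ∩ Cj.1 := by
  classical
  constructor
  · rintro ⟨u, v, ⟨huS, hvS, hune, hall⟩, hmin⟩
    obtain ⟨Cu, hCu, hCu'⟩ := exists_maximalClique_supset (G.isClique_singleton u)
    obtain ⟨Cv, hCv, hCv'⟩ := exists_maximalClique_supset (G.isClique_singleton v)
    have huCu : u ∈ Cu := hCu' rfl
    have hvCv : v ∈ Cv := hCv' rfl
    obtain ⟨p0⟩ := hT.isConnected.preconnected ⟨Cu, hCu⟩ ⟨Cv, hCv⟩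
    set q := p0.toPath.1 with hq
    have hqpath : q.IsPath := p0.toPath.2
    rcases walk_or_dart hvS q hvCv u huCu huS with ⟨w, hw⟩ | ⟨d, hd, hsub⟩
    · obtain ⟨z, hz, hzS⟩ := hall w
      exact absurd hzS (hw z hz)
    · obtain ⟨⟨w1, h1⟩, ⟨w2, h2⟩⟩ := dart_sides q hqpath d hd
      have side1 : SideOf T d.fst d.snd ⟨Cu, hCu⟩ := ⟨w1, h1⟩
      have side2 : SideOf T d.snd d.fst ⟨Cv, hCv⟩ := by
        refine ⟨w2.reverse, ?_⟩
        rw [Walk.edges_reverse, List.mem_reverse]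
        intro hmem
        exact h2 (by rwa [Sym2.eq_swap] at hmem)
      have hsep : Separates G (d.fst.1 ∩ d.snd.1) u v := by
        refine ⟨fun hu => huS (hsub hu), fun hv => hvS (hsub hv), hune, fun pw => ?_⟩
        obtain ⟨z, hz, hz1, hz2⟩ := sep_lemma hT hconn d.adj pw
          ⟨⟨Cu, hCu⟩, huCu, side1⟩ ⟨⟨Cv, hCv⟩, hvCv, side2⟩
        exact ⟨z, hz, hz1, hz2⟩
      exact ⟨d.fst, d.snd, d.adj, (hmin _ hsub hsep).symm⟩
  · rintro ⟨Ci, Cj, hadj, rfl⟩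
    have hne : Ci ≠ Cj := hadj.ne
    have hnsub1 : ¬ Ci.1 ⊆ Cj.1 := fun hsub =>
      hne (Subtype.ext (Ci.2.2 Cj.1 Cj.2.1 hsub))
    have hnsub2 : ¬ Cj.1 ⊆ Ci.1 := fun hsub =>
      hne (Subtype.ext (Cj.2.2 Ci.1 Ci.2.1 hsub).symm)
    obtain ⟨u, huCi, huCj⟩ := Set.not_subset.mp hnsub1
    obtain ⟨v, hvCj, hvCi⟩ := Set.not_subset.mp hnsub2
    have huS : u ∉ Ci.1 ∩ Cj.1 := fun h => huCj h.2
    have hvS : v ∉ Ci.1 ∩ Cj.1 := fun h => hvCi h.1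
    have hune : u ≠ v := fun h => huCj (h ▸ hvCj)
    refine ⟨u, v, ⟨huS, hvS, hune, fun pw => ?_⟩, ?_⟩
    · obtain ⟨z, hz, hz1, hz2⟩ := sep_lemma hT hconn hadj pw
        ⟨Ci, huCi, ⟨Walk.nil, by simp⟩⟩ ⟨Cj, hvCj, ⟨Walk.nil, by simp⟩⟩
      exact ⟨z, hz, hz1, hz2⟩
    · intro S' hS' hsep'
      by_contra hne'
      obtain ⟨w, hwS, hwS'⟩ := Set.not_subset.mp (fun hsub => hne' (hS'.antisymm hsub))
      have huw : G.Adj u w := Ci.2.1 huCi hwS.1 (fun h => huS (h ▸ hwS))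
      have hwv : G.Adj w v := Cj.2.1 hwS.2 hvCj (fun h => hvS (h ▸ hwS))
      obtain ⟨z, hz, hzS'⟩ := hsep'.2.2.2 (Walk.cons huw (Walk.cons hwv Walk.nil))
      simp only [Walk.support_cons, Walk.support_nil, List.mem_cons, List.mem_singleton,
        List.not_mem_nil, or_false] at hz
      rcases hz with rfl | rfl | rfl
      · exact hsep'.1 hzS'
      · exact hwS' hzS'
      · exact hsep'.2.1 hzS'
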